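/- A play ρ = (s_k, a_k, s'_k)_{k∈ℕ} from the initial state in the finite concurrent game associated with a timed network game is the outcome of some Nash equilibrium if and only if for every player i, every index k, and every action b_i allowed for player i at s_k, if player i has not yet visited their target along the prefix ρ_{<k}, then cost_i(ρ_{≥k}) ≤ Val_i(s') + cost_i(s_k, (a_{k,-i}, b_i), s'), where s' = Update(s_k, (a_{k,-i}, b_i)) and Val_i(s') = sup over strategies σ_{-i} of the coalition of all other players of the infimum over strategies σ_i of player i of cost_i of the resulting outcome from s'. -/

import Mathlib

open scoped Classical

/-- An `n`-player concurrent game: states, actions, allowed actions per player,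
and a deterministic update function. -/
structure CGame (n : ℕ) where
  State : Type
  Act : Type
  allowed : Fin n → State → Set Act
  update : State → (Fin n → Act) → State

namespace CGame

variable {n : ℕ} (G : CGame n)

/-- A play: an infinite sequence of (state, action vector). -/
abbrev Play := ℕ → G.State × (Fin n → G.Act)

/-- A play is valid: actions are allowed and states are updated consistently. -/
def IsPlay (ρ : G.Play) : Prop :=
  ∀ k, (∀ i, (ρ k).2 i ∈ G.allowed i (ρ k).1) ∧
    (ρ (k+1)).1 = G.update (ρ k).1 (ρ k).2

/-- Histories. -/
abbrev Hist := List (G.State × (Fin n → G.Act))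

/-- Strategies map histories to actions. -/
abbrev Strategy := G.Hist → G.Act

/-- Last state of a history from `s₀`. -/
noncomputable def lastState (s₀ : G.State) (h : G.Hist) : G.State :=
  match h.getLast? with
  | none => s₀
  | some p => G.update p.1 p.2

/-- `σ` is a valid strategy for player `i` from `s₀`. -/
def IsStrategy (i : Fin n) (s₀ : G.State) (σ : G.Strategy) : Prop :=
  ∀ h : G.Hist, σ h ∈ G.allowed i (G.lastState s₀ h)

/-- Run of a strategy profile from `s₀`. -/
noncomputable def run (σ : Fin n → G.Strategy) (s₀ : G.State) :
    ℕ → G.State × G.Hist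
  | 0 => (s₀, [])
  | k+1 =>
      (G.update (run σ s₀ k).1 (fun i => σ i (run σ s₀ k).2),
       (run σ s₀ k).2 ++ [((run σ s₀ k).1, fun i => σ i (run σ s₀ k).2)])

/-- Outcome of a strategy profile from `s₀`, as a play. -/
noncomputable def outcome (σ : Fin n → G.Strategy) (s₀ : G.State) : G.Play :=
  fun k => ((G.run σ s₀ k).1, fun i => σ i (G.run σ s₀ k).2)

/-- Nash equilibrium from `s₀`, for given cost functions on plays. -/
def IsNE (cost : Fin n → G.Play → ℕ∞) (σ : Fin n → G.Strategy) (s₀ : G.State) :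
    Prop :=
  (∀ i, G.IsStrategy i s₀ (σ i)) ∧
  ∀ i τ, G.IsStrategy i s₀ τ →
    cost i (G.outcome σ s₀) ≤ cost i (G.outcome (Function.update σ i τ) s₀)

end CGame

namespace CGame

variable {n : ℕ} (G : CGame n)

/-- Cost of a play for player `i`: sum of per-transition costs `tc` until the
first visit of player `i`'s target (`⊤` if the target is never visited). -/
noncomputable def playCost (tc : Fin n → G.State → (Fin n → G.Act) → ℕ)
    (tgt : Fin n → G.State → Prop) (i : Fin n) (ρ : G.Play) : ℕ∞ :=
  if h : ∃ k, tgt i (ρ k).1 then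
    ((∑ k ∈ Finset.range (Nat.find h), tc i (ρ k).1 (ρ k).2 : ℕ) : ℕ∞)
  else ⊤

/-- The lower value for player `i` at state `s`: sup over strategies of the
coalition of the other players of the inf over player-`i` strategies of the
cost of the resulting outcome from `s`. -/
noncomputable def Val (tc : Fin n → G.State → (Fin n → G.Act) → ℕ)
    (tgt : Fin n → G.State → Prop) (i : Fin n) (s : G.State) : ℕ∞ :=
  ⨆ (σ : Fin n → G.Strategy) (_ : ∀ j, G.IsStrategy j s (σ j)),
    ⨅ (τ : G.Strategy) (_ : G.IsStrategy i s τ),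
      G.playCost tc tgt i (G.outcome (Function.update σ i τ) s)

end CGame


namespace CGame

variable {n : ℕ} {G : CGame n}

/-! ### Auxiliary lemmas -/

theorem aux_enat_min {ι : Type*} [Nonempty ι] (f : ι → ℕ∞) : ∃ j, ∀ j', f j ≤ f j' := by
  by_cases h : ∀ j, f j = ⊤
  · exact ⟨Classical.arbitrary ι, fun j' => by simp [h]⟩
  · push_neg at h
    obtain ⟨j, hj⟩ := h
    have hS : ∃ m : ℕ, ∃ j, f j = (m : ℕ∞) := by
      obtain ⟨m, hm⟩ := WithTop.ne_top_iff_exists.mp hj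
      exact ⟨m, j, by exact_mod_cast hm.symm⟩
    obtain ⟨j₀, hj₀⟩ := Nat.find_spec hS
    refine ⟨j₀, fun j' => ?_⟩
    rcases eq_or_ne (f j') ⊤ with h' | h'
    · simp [h']
    · obtain ⟨m', hm'⟩ := WithTop.ne_top_iff_exists.mp h'
      have h2 : Nat.find hS ≤ m' := Nat.find_min' hS ⟨j', by exact_mod_cast hm'.symm⟩
      rw [hj₀, ← hm']
      simp only [ENat.some_eq_coe]
      exact ENat.coe_le_coe.mpr h2

theorem aux_lastState_nil (s₀ : G.State) : G.lastState s₀ [] = s₀ := rfl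

theorem aux_lastState_concat (s₀ : G.State) (h : G.Hist) (p : G.State × (Fin n → G.Act)) :
    G.lastState s₀ (h ++ [p]) = G.update p.1 p.2 := by
  show (match (h ++ [p]).getLast? with
    | none => s₀
    | some q => G.update q.1 q.2) = _
  rw [List.getLast?_concat]

theorem aux_lastState_append (s₀ : G.State) (h₁ h₂ : G.Hist) :
    G.lastState s₀ (h₁ ++ h₂) = G.lastState (G.lastState s₀ h₁) h₂ := by
  rcases h₂.eq_nil_or_concat with rfl | ⟨l, p, rfl⟩
  · simp [aux_lastState_nil]
  · simp only [List.concat_eq_append]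
    rw [← List.append_assoc, aux_lastState_concat, aux_lastState_concat]

theorem aux_isStrategy_shift {i : Fin n} {s₀ : G.State} {σ : G.Strategy}
    (hσ : G.IsStrategy i s₀ σ) (h₀ : G.Hist) :
    G.IsStrategy i (G.lastState s₀ h₀) (fun h => σ (h₀ ++ h)) := fun h => by
  rw [← aux_lastState_append]; exact hσ _

/-- The history consisting of the first `k` steps of the play `ρ`. -/
noncomputable def hist (ρ : G.Play) (k : ℕ) : G.Hist := (List.range k).map ρ

theorem hist_length (ρ : G.Play) (k : ℕ) : (hist ρ k).length = k := by simp [hist]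

theorem hist_succ (ρ : G.Play) (k : ℕ) : hist ρ (k+1) = hist ρ k ++ [ρ k] := by
  rw [hist, List.range_succ]; simp [hist]

theorem hist_getElem?_lt (ρ : G.Play) {k m : ℕ} (h : m < k) :
    (hist ρ k)[m]? = some (ρ m) := by
  simp [hist, List.getElem?_map, List.getElem?_range h]

theorem hist_getElem?_ge (ρ : G.Play) {k m : ℕ} (h : k ≤ m) : (hist ρ k)[m]? = none := by
  apply List.getElem?_eq_none; simpa [hist] using h

theorem aux_con_hist (ρ : G.Play) (k : ℕ) :
    ¬ ∃ m, ((hist ρ k)[m]?).getD (ρ m) ≠ ρ m := by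
  rintro ⟨m, hm⟩
  rcases lt_or_ge m k with h | h
  · rw [hist_getElem?_lt ρ h] at hm; simp at hm
  · rw [hist_getElem?_ge ρ h] at hm; simp at hm

theorem aux_lastState_con {ρ : G.Play} {s₀ : G.State} (hρ : G.IsPlay ρ)
    (hρ0 : (ρ 0).1 = s₀) {h : G.Hist}
    (hc : ∀ m, (h[m]?).getD (ρ m) = ρ m) :
    G.lastState s₀ h = (ρ h.length).1 := by
  rcases h.eq_nil_or_concat with rfl | ⟨l, p, rfl⟩
  · rw [aux_lastState_nil]; exact hρ0.symm
  · simp only [List.concat_eq_append] at hc ⊢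
    have hget : (l ++ [p])[l.length]? = some p := by
      rw [List.getElem?_append_right le_rfl]; simp
    have hp : p = ρ l.length := by
      have := hc l.length
      rw [hget] at this
      simpa using this
    rw [aux_lastState_concat]
    have := (hρ l.length).2
    simp only [List.length_append, List.length_singleton]
    rw [this, hp]

theorem aux_run_eq {ρ : G.Play} {s₀ : G.State} (hρ : G.IsPlay ρ) (hρ0 : (ρ 0).1 = s₀)
    (π : Fin n → G.Strategy) (m : ℕ) (hl : ∀ l, l < m → G.outcome π s₀ l = ρ l) :
    G.run π s₀ m = ((ρ m).1, hist ρ m) := by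
  induction m with
  | zero =>
    show (s₀, ([] : G.Hist)) = _
    rw [hρ0]
    rfl
  | succ m ih =>
    have hr := ih (fun l hl' => hl l (hl'.trans (Nat.lt_succ_self m)))
    have ho := hl m (Nat.lt_succ_self m)
    have ha : (fun j => π j (hist ρ m)) = (ρ m).2 := by
      have h2 : G.outcome π s₀ m = ((ρ m).1, fun j => π j (hist ρ m)) := by
        show ((G.run π s₀ m).1, fun j => π j (G.run π s₀ m).2) = _
        rw [hr]
      rw [h2] at ho
      exact congrArg Prod.snd ho
    show (G.update (G.run π s₀ m).1 (fun j => π j (G.run π s₀ m).2),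
      (G.run π s₀ m).2 ++ [((G.run π s₀ m).1, fun j => π j (G.run π s₀ m).2)]) = _
    rw [hr]
    simp only [ha]
    rw [hist_succ]
    refine Prod.ext ?_ ?_
    · exact ((hρ m).2).symm
    · simp

theorem aux_outcome_eq {ρ : G.Play} {s₀ : G.State} (hρ : G.IsPlay ρ) (hρ0 : (ρ 0).1 = s₀)
    (π : Fin n → G.Strategy) (hcons : ∀ m j, π j (hist ρ m) = (ρ m).2 j) :
    ∀ m, G.outcome π s₀ m = ρ m := by
  intro m
  induction m using Nat.strong_induction_on with
  | _ m ih =>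
    have hr := aux_run_eq hρ hρ0 π m ih
    show ((G.run π s₀ m).1, fun j => π j (G.run π s₀ m).2) = ρ m
    rw [hr]
    refine Prod.ext rfl ?_
    funext j
    exact hcons m j

theorem aux_run_succ {ρ : G.Play} {s₀ : G.State} (hρ : G.IsPlay ρ)
    (π : Fin n → G.Strategy) {k : ℕ} (a' : Fin n → G.Act)
    (hr : G.run π s₀ k = ((ρ k).1, hist ρ k))
    (ha : (fun j => π j (hist ρ k)) = a') :
    G.run π s₀ (k+1) = (G.update (ρ k).1 a', hist ρ k ++ [((ρ k).1, a')]) := by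
  show (G.update (G.run π s₀ k).1 (fun j => π j (G.run π s₀ k).2),
    (G.run π s₀ k).2 ++ [((G.run π s₀ k).1, fun j => π j (G.run π s₀ k).2)]) = _
  rw [hr]
  simp only [ha]

theorem aux_run_shift (σ : Fin n → G.Strategy) (s₀ : G.State) (K m : ℕ) :
    G.run σ s₀ (K + m) =
      ((G.run (fun j h => σ j ((G.run σ s₀ K).2 ++ h)) (G.run σ s₀ K).1 m).1,
       (G.run σ s₀ K).2 ++
         (G.run (fun j h => σ j ((G.run σ s₀ K).2 ++ h)) (G.run σ s₀ K).1 m).2) := by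
  induction m with
  | zero => show G.run σ s₀ K = _; simp [run]
  | succ m ih =>
    show G.run σ s₀ ((K + m) + 1) = _
    show (G.update (G.run σ s₀ (K+m)).1 (fun j => σ j (G.run σ s₀ (K+m)).2),
      (G.run σ s₀ (K+m)).2 ++ [((G.run σ s₀ (K+m)).1, fun j => σ j (G.run σ s₀ (K+m)).2)]) = _
    rw [ih]
    show _ = ((G.update _ (fun j => (fun j h => σ j ((G.run σ s₀ K).2 ++ h)) j _), _))
    simp [run, List.append_assoc]

theorem aux_outcome_shift (σ : Fin n → G.Strategy) (s₀ : G.State) (K m : ℕ) :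
    G.outcome σ s₀ (K + m) =
      G.outcome (fun j h => σ j ((G.run σ s₀ K).2 ++ h)) (G.run σ s₀ K).1 m := by
  show ((G.run σ s₀ (K+m)).1, fun j => σ j (G.run σ s₀ (K+m)).2) = _
  rw [aux_run_shift]
  rfl

theorem aux_run_snd (σ : Fin n → G.Strategy) (s₀ : G.State) (k : ℕ) :
    (G.run σ s₀ k).2 = (List.range k).map (G.outcome σ s₀) := by
  induction k with
  | zero => simp [run]
  | succ k ih =>
    rw [List.range_succ, List.map_append]
    show (G.run σ s₀ k).2 ++ [G.outcome σ s₀ k] = _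
    rw [ih]
    rfl

/-! ### playCost lemmas -/

theorem playCost_step (tc : Fin n → G.State → (Fin n → G.Act) → ℕ)
    (tgt : Fin n → G.State → Prop) (i : Fin n) (ρ : G.Play) (h0 : ¬ tgt i (ρ 0).1) :
    G.playCost tc tgt i ρ =
      (tc i (ρ 0).1 (ρ 0).2 : ℕ∞) + G.playCost tc tgt i (fun m => ρ (1 + m)) := by
  by_cases h : ∃ k, tgt i (ρ k).1
  · have h' : ∃ k, tgt i ((fun m => ρ (1+m)) k).1 := by
      obtain ⟨k, hk⟩ := h
      cases k with
      | zero => exact absurd hk h0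
      | succ k => exact ⟨k, by simpa [Nat.add_comm] using hk⟩
    have hfind : Nat.find h = Nat.find h' + 1 := by
      apply le_antisymm
      · have := Nat.find_spec h'
        exact Nat.find_le (by simpa [Nat.add_comm] using this)
      · obtain ⟨m, hm⟩ : ∃ m, Nat.find h = m + 1 := by
          cases hfh : Nat.find h with
          | zero => exact absurd (hfh ▸ Nat.find_spec h) h0
          | succ m => exact ⟨m, rfl⟩
        rw [hm]
        have hmm : tgt i (ρ (m+1)).1 := hm ▸ Nat.find_spec h
        exact Nat.succ_le_succ (Nat.find_min' h' (by simpa [Nat.add_comm] using hmm))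
    rw [playCost, dif_pos h, playCost, dif_pos h', hfind, Finset.sum_range_succ']
    push_cast
    rw [add_comm]
    congr 1
    refine Finset.sum_congr rfl fun j _ => ?_
    rw [Nat.add_comm]
  · have h' : ¬ ∃ k, tgt i ((fun m => ρ (1+m)) k).1 := fun ⟨k, hk⟩ => h ⟨1+k, hk⟩
    rw [playCost, dif_neg h, playCost, dif_neg h']
    simp

theorem playCost_decomp (tc : Fin n → G.State → (Fin n → G.Act) → ℕ)
    (tgt : Fin n → G.State → Prop) (i : Fin n) (ρ : G.Play) (k : ℕ)
    (h : ∀ j, j < k → ¬ tgt i (ρ j).1) :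
    G.playCost tc tgt i ρ =
      ((∑ j ∈ Finset.range k, tc i (ρ j).1 (ρ j).2 : ℕ) : ℕ∞) +
        G.playCost tc tgt i (fun m => ρ (k + m)) := by
  induction k with
  | zero => simp
  | succ k ih =>
    rw [ih (fun j hj => h j (hj.trans (Nat.lt_succ_self k)))]
    rw [playCost_step tc tgt i (fun m => ρ (k+m)) (by simpa using h k (Nat.lt_succ_self k))]
    have he : (fun m => (fun m' => ρ (k + m')) (1 + m)) = fun m => ρ ((k+1) + m) := by
      funext m; rw [Nat.add_assoc]
    rw [he, Finset.sum_range_succ]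
    push_cast
    rw [add_assoc]
    simp

theorem playCost_eq_of_agree (tc : Fin n → G.State → (Fin n → G.Act) → ℕ)
    (tgt : Fin n → G.State → Prop) (i : Fin n) (ρ ρ' : G.Play) (k : ℕ)
    (hs : ∀ m, m ≤ k → (ρ' m).1 = (ρ m).1) (ha : ∀ m, m < k → ρ' m = ρ m)
    (hk : ∃ j, j ≤ k ∧ tgt i (ρ j).1) :
    G.playCost tc tgt i ρ' = G.playCost tc tgt i ρ := by
  obtain ⟨j, hjk, hj⟩ := hk
  have hE : ∃ m, tgt i (ρ m).1 := ⟨j, hj⟩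
  have hE' : ∃ m, tgt i (ρ' m).1 := ⟨j, by rw [hs j hjk]; exact hj⟩
  have hfE : Nat.find hE ≤ k := (Nat.find_min' hE hj).trans hjk
  have hfE' : Nat.find hE' ≤ k := (Nat.find_min' hE' (by rw [hs j hjk]; exact hj)).trans hjk
  have heq : Nat.find hE' = Nat.find hE := by
    apply le_antisymm
    · exact Nat.find_min' hE' (by rw [hs _ hfE]; exact Nat.find_spec hE)
    · exact Nat.find_min' hE (by rw [← hs _ hfE']; exact Nat.find_spec hE')
  rw [playCost, dif_pos hE', playCost, dif_pos hE, heq]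
  congr 1
  refine Finset.sum_congr rfl fun m hm => ?_
  rw [ha m (lt_of_lt_of_le (Finset.mem_range.mp hm) hfE)]

/-! ### Strategy constructions -/

theorem aux_con_hist' (ρ : G.Play) (k : ℕ) (m : ℕ) :
    ((hist ρ k)[m]?).getD (ρ m) = ρ m := by
  rcases lt_or_ge m k with h | h
  · rw [hist_getElem?_lt ρ h]; rfl
  · rw [hist_getElem?_ge ρ h]; rfl

/-- The Nash equilibrium strategy: follow `ρ`; if some single player deviated at
the first point of deviation, punish that player. -/
noncomputable def neStrat (G : CGame n) (ρ : G.Play)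
    (P : G.State → Fin n → Fin n → G.Strategy)
    (A : Fin n → G.State → G.Act) (s₀ : G.State) (j : Fin n) : G.Strategy := fun h =>
  if hd : ∃ m, (h[m]?.getD (ρ m)) ≠ ρ m then
    if hD : ∃ i, ∀ j', j' ≠ i →
        ((h[Nat.find hd]?).getD (ρ (Nat.find hd))).2 j' = (ρ (Nat.find hd)).2 j' then
      P (G.update ((h[Nat.find hd]?).getD (ρ (Nat.find hd))).1
          ((h[Nat.find hd]?).getD (ρ (Nat.find hd))).2)
        (Classical.choose hD) j (h.drop (Nat.find hd + 1))
    else A j (G.lastState s₀ h)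
  else (ρ h.length).2 j

theorem neStrat_hist (ρ : G.Play) (P : G.State → Fin n → Fin n → G.Strategy)
    (A : Fin n → G.State → G.Act) (s₀ : G.State) (j : Fin n) (m : ℕ) :
    neStrat G ρ P A s₀ j (hist ρ m) = (ρ m).2 j := by
  simp only [neStrat]
  rw [dif_neg (by rintro ⟨m', hm'⟩; exact hm' (aux_con_hist' ρ m m')), hist_length]

theorem neStrat_valid {ρ : G.Play} {s₀ : G.State} (hρ : G.IsPlay ρ) (hρ0 : (ρ 0).1 = s₀)
    {P : G.State → Fin n → Fin n → G.Strategy} {A : Fin n → G.State → G.Act}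
    (hP : ∀ s i j, G.IsStrategy j s (P s i j)) (hA : ∀ j s, A j s ∈ G.allowed j s)
    (j : Fin n) : G.IsStrategy j s₀ (neStrat G ρ P A s₀ j) := by
  intro h
  simp only [neStrat]
  split_ifs with hd hD
  · have hdlt : Nat.find hd < h.length := by
      by_contra hle
      push_neg at hle
      have := Nat.find_spec hd
      rw [List.getElem?_eq_none hle] at this
      simp at this
    have hp : h[Nat.find hd]? = some h[Nat.find hd] := List.getElem?_eq_getElem hdlt
    have htake : h.take (Nat.find hd + 1) = h.take (Nat.find hd) ++ [h[Nat.find hd]] := by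
      rw [List.take_succ, hp]; rfl
    have hls : G.lastState s₀ h =
        G.lastState (G.update h[Nat.find hd].1 h[Nat.find hd].2) (h.drop (Nat.find hd + 1)) := by
      conv_lhs => rw [← List.take_append_drop (Nat.find hd + 1) h]
      rw [aux_lastState_append, htake, aux_lastState_concat]
    rw [hls]
    simp only [hp, Option.getD_some]
    exact hP _ _ j _
  · exact hA j _
  · push_neg at hd
    rw [aux_lastState_con hρ hρ0 hd]
    exact (hρ h.length).1 j

theorem neStrat_dev {ρ : G.Play} {i : Fin n} {k : ℕ} {b : G.Act}
    (hb : b ≠ (ρ k).2 i) (P : G.State → Fin n → Fin n → G.Strategy)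
    (A : Fin n → G.State → G.Act) (s₀ : G.State) (j : Fin n) (h : G.Hist) :
    neStrat G ρ P A s₀ j ((hist ρ k ++ [((ρ k).1, Function.update (ρ k).2 i b)]) ++ h) =
      P (G.update (ρ k).1 (Function.update (ρ k).2 i b)) i j h := by
  set x : G.State × (Fin n → G.Act) := ((ρ k).1, Function.update (ρ k).2 i b) with hx
  have hgm : ∀ m, m < k → ((hist ρ k ++ [x]) ++ h)[m]? = some (ρ m) := by
    intro m hm
    rw [List.getElem?_append_left (by simp [hist_length]; omega),
      List.getElem?_append_left (by simp [hist_length]; omega), hist_getElem?_lt ρ hm]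
  have hgk : ((hist ρ k ++ [x]) ++ h)[k]? = some x := by
    rw [List.getElem?_append_left (by simp [hist_length]),
      List.getElem?_append_right (by simp [hist_length])]
    simp [hist_length]
  have hxne : x ≠ ρ k := by
    intro heq
    have h2 : Function.update (ρ k).2 i b = (ρ k).2 := congrArg Prod.snd heq
    exact hb (by rw [← h2]; simp)
  have hDev : ∃ m, (((hist ρ k ++ [x]) ++ h)[m]?).getD (ρ m) ≠ ρ m :=
    ⟨k, by rw [hgk]; simpa using hxne⟩
  have hfind : Nat.find hDev = k := by
    apply le_antisymm
    · exact Nat.find_min' hDev (by rw [hgk]; simpa using hxne)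
    · rw [Nat.le_find_iff]
      intro m hm
      rw [hgm m hm]
      simp
  have hdrop : ((hist ρ k ++ [x]) ++ h).drop (k+1) = h := by
    rw [show k+1 = (hist ρ k ++ [x]).length from by simp [hist_length]]
    exact List.drop_left
  simp only [neStrat]
  rw [dif_pos hDev]
  simp only [hfind, hgk, Option.getD_some]
  have hD : ∃ i', ∀ j', j' ≠ i' → x.2 j' = (ρ k).2 j' :=
    ⟨i, fun j' hj' => Function.update_of_ne hj' _ _⟩
  rw [dif_pos hD]
  have hch : Classical.choose hD = i := by
    by_contra hne
    have hspec := Classical.choose_spec hD i (fun he => hne he.symm)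
    rw [hx] at hspec
    simp only [Function.update_self] at hspec
    exact hb hspec
  rw [hch, hdrop]

/-- The deviation strategy for player `i`: follow `ρ` for `k` steps, play `b`,
then follow `τ'`. -/
noncomputable def devStrat (G : CGame n) (ρ : G.Play) (i : Fin n) (k : ℕ) (b : G.Act)
    (τ' : G.Strategy) (A : G.State → G.Act) (s₀ : G.State) : G.Strategy := fun h =>
  if h.length < k ∧ ∀ m, (h[m]?.getD (ρ m)) = ρ m then (ρ h.length).2 i
  else if h = hist ρ k then b
  else if (hist ρ k ++ [((ρ k).1, Function.update (ρ k).2 i b)]) <+: h then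
    τ' (h.drop (k+1))
  else A (G.lastState s₀ h)

theorem devStrat_lt {ρ : G.Play} {i : Fin n} {k : ℕ} {b : G.Act} (τ' : G.Strategy)
    (A : G.State → G.Act) (s₀ : G.State) {m : ℕ} (hm : m < k) :
    devStrat G ρ i k b τ' A s₀ (hist ρ m) = (ρ m).2 i := by
  simp only [devStrat]
  rw [if_pos ⟨by simpa [hist_length] using hm, fun m' => aux_con_hist' ρ m m'⟩, hist_length]

theorem devStrat_k {ρ : G.Play} {i : Fin n} {k : ℕ} {b : G.Act} (τ' : G.Strategy)
    (A : G.State → G.Act) (s₀ : G.State) :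
    devStrat G ρ i k b τ' A s₀ (hist ρ k) = b := by
  simp only [devStrat]
  rw [if_neg (fun hc => lt_irrefl k (by simpa [hist_length] using hc.1))]
  simp

theorem devStrat_dev {ρ : G.Play} {i : Fin n} {k : ℕ} {b : G.Act} (τ' : G.Strategy)
    (A : G.State → G.Act) (s₀ : G.State) (h : G.Hist) :
    devStrat G ρ i k b τ' A s₀
        ((hist ρ k ++ [((ρ k).1, Function.update (ρ k).2 i b)]) ++ h) = τ' h := by
  set x : G.State × (Fin n → G.Act) := ((ρ k).1, Function.update (ρ k).2 i b) with hx
  have hlen : ((hist ρ k ++ [x]) ++ h).length = k + 1 + h.length := by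
    simp [hist_length]; omega
  have hdrop : ((hist ρ k ++ [x]) ++ h).drop (k+1) = h := by
    rw [show k+1 = (hist ρ k ++ [x]).length from by simp [hist_length]]
    exact List.drop_left
  simp only [devStrat]
  rw [if_neg (fun hc => by rw [hlen] at hc; omega), if_neg (fun hc => by
      have := congrArg List.length hc
      rw [hlen, hist_length] at this
      omega),
    if_pos ⟨h, rfl⟩, hdrop]

theorem devStrat_valid {ρ : G.Play} {s₀ : G.State} (hρ : G.IsPlay ρ) (hρ0 : (ρ 0).1 = s₀)
    {i : Fin n} {k : ℕ} {b : G.Act} {τ' : G.Strategy} {A : G.State → G.Act}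
    (hb : b ∈ G.allowed i (ρ k).1)
    (hτ' : G.IsStrategy i (G.update (ρ k).1 (Function.update (ρ k).2 i b)) τ')
    (hA : ∀ s, A s ∈ G.allowed i s) :
    G.IsStrategy i s₀ (devStrat G ρ i k b τ' A s₀) := by
  intro h
  simp only [devStrat]
  split_ifs with h1 h2 h3
  · rw [aux_lastState_con hρ hρ0 h1.2]
    exact (hρ h.length).1 i
  · subst h2
    rw [aux_lastState_con hρ hρ0 (fun m' => aux_con_hist' ρ k m'), hist_length]
    exact hb
  · obtain ⟨t, ht⟩ := h3
    have hdrop : ((hist ρ k ++ [((ρ k).1, Function.update (ρ k).2 i b)]) ++ t).drop (k+1) = t := by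
      rw [show k+1 = (hist ρ k ++ [((ρ k).1, Function.update (ρ k).2 i b)]).length from by
        simp [hist_length]]
      exact List.drop_left
    rw [← ht, aux_lastState_append, aux_lastState_concat, hdrop]
    exact hτ' t
  · exact hA _

end CGame

namespace CGame

/-- Characterization of outcomes of Nash equilibria in a (finite) concurrent
game with per-transition costs and target objectives. -/
theorem NE_outcome_characterization {n : ℕ} (G : CGame n)
    (tc : Fin n → G.State → (Fin n → G.Act) → ℕ)
    (tgt : Fin n → G.State → Prop) (s₀ : G.State)
    (hpunish : ∀ (s : G.State) (i : Fin n), ∃ σ : Fin n → G.Strategy,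
      (∀ j, G.IsStrategy j s (σ j)) ∧
      ∀ τ, G.IsStrategy i s τ →
        G.Val tc tgt i s ≤ G.playCost tc tgt i (G.outcome (Function.update σ i τ) s))
    (ρ : G.Play) (hρ : G.IsPlay ρ) (hρ0 : (ρ 0).1 = s₀) :
    (∃ σ : Fin n → G.Strategy,
        G.IsNE (fun i => G.playCost tc tgt i) σ s₀ ∧ ∀ k, G.outcome σ s₀ k = ρ k) ↔
    (∀ (i : Fin n) (k : ℕ) (b : G.Act), b ∈ G.allowed i (ρ k).1 →
      (∀ j ≤ k, ¬ tgt i (ρ j).1) →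
      G.playCost tc tgt i (fun m => ρ (k + m)) ≤
        G.Val tc tgt i (G.update (ρ k).1 (Function.update (ρ k).2 i b)) +
        (tc i (ρ k).1 (Function.update (ρ k).2 i b) : ℕ∞)) := by
  classical
  have hact : ∀ (j : Fin n) (s : G.State), ∃ a, a ∈ G.allowed j s := fun j s =>
    ⟨Classical.choose (hpunish s j) j [], (Classical.choose_spec (hpunish s j)).1 j []⟩
  choose A hA using hact
  constructor
  · rintro ⟨σ, ⟨hσval, hσne⟩, hout⟩ i k b hb hnt
    set a' : Fin n → G.Act := Function.update (ρ k).2 i b with ha'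
    set s' : G.State := G.update (ρ k).1 a' with hs'
    set devH : G.Hist := hist ρ k ++ [((ρ k).1, a')] with hdevH
    set σ' : Fin n → G.Strategy := fun j h => σ j (devH ++ h) with hσ'
    have hlsdev : G.lastState s₀ devH = s' := aux_lastState_concat s₀ (hist ρ k) _
    have hσ'val : ∀ j, G.IsStrategy j s' (σ' j) := fun j => by
      rw [← hlsdev]; exact aux_isStrategy_shift (hσval j) devH
    have hne0 : Nonempty {τ : G.Strategy // G.IsStrategy i s' τ} :=
      ⟨⟨fun h => A i (G.lastState s' h), fun h => hA i _⟩⟩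
    obtain ⟨τs, hτs⟩ := aux_enat_min (fun τ : {τ : G.Strategy // G.IsStrategy i s' τ} =>
      G.playCost tc tgt i (G.outcome (Function.update σ' i τ.1) s'))
    have hτsVal : G.playCost tc tgt i (G.outcome (Function.update σ' i τs.1) s') ≤
        G.Val tc tgt i s' := by
      rw [Val]
      refine le_trans (le_iInf₂ fun τ hτ => hτs ⟨τ, hτ⟩) ?_
      exact le_iSup₂_of_le σ' hσ'val le_rfl
    set τ : G.Strategy := devStrat G ρ i k b τs.1 (A i) s₀ with hτdef
    have hτval : G.IsStrategy i s₀ τ := devStrat_valid hρ hρ0 hb τs.2 (hA i)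
    have hNE := hσne i τ hτval
    set π : Fin n → G.Strategy := Function.update σ i τ with hπ
    have hσhist : ∀ m j, σ j (hist ρ m) = (ρ m).2 j := by
      intro m j
      have h1 : (G.run σ s₀ m).2 = hist ρ m := by
        rw [aux_run_snd, hist]
        exact List.map_congr_left (fun l _ => hout l)
      have h2 : (fun j => σ j ((G.run σ s₀ m).2)) = (ρ m).2 := congrArg Prod.snd (hout m)
      rw [h1] at h2
      exact congrFun h2 j
    have houtπ : ∀ m, m < k → G.outcome π s₀ m = ρ m := by
      intro m
      induction m using Nat.strong_induction_on with
      | _ m ih =>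
        intro hmk
        have hr := aux_run_eq hρ hρ0 π m (fun l hl => ih l hl (hl.trans hmk))
        show ((G.run π s₀ m).1, fun j => π j (G.run π s₀ m).2) = ρ m
        rw [hr]
        refine Prod.ext rfl ?_
        funext j
        show π j (hist ρ m) = (ρ m).2 j
        rcases eq_or_ne j i with hji | hne
        · rw [hji, hπ]
          simp only [Function.update_self]
          exact devStrat_lt τs.1 (A i) s₀ hmk
        · rw [hπ, Function.update_of_ne hne]
          exact hσhist m j
    have hrk : G.run π s₀ k = ((ρ k).1, hist ρ k) := aux_run_eq hρ hρ0 π k houtπ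
    have hactk : (fun j => π j (hist ρ k)) = a' := by
      funext j
      rcases eq_or_ne j i with hji | hne
      · show π j (hist ρ k) = a' j
        rw [hji, hπ, ha']
        simp only [Function.update_self]
        exact devStrat_k τs.1 (A i) s₀
      · show π j (hist ρ k) = a' j
        rw [hπ, Function.update_of_ne hne, ha', Function.update_of_ne hne]
        exact hσhist k j
    have hrk1 : G.run π s₀ (k+1) = (s', devH) := aux_run_succ hρ π a' hrk hactk
    have hπ' : (fun j h => π j ((G.run π s₀ (k+1)).2 ++ h)) = Function.update σ' i τs.1 := by
      funext j h
      simp only [hrk1]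
      show π j (devH ++ h) = _
      rcases eq_or_ne j i with hji | hne
      · rw [hji, hπ]
        simp only [Function.update_self]
        exact devStrat_dev τs.1 (A i) s₀ h
      · rw [hπ, Function.update_of_ne hne, Function.update_of_ne hne]
    have hshift : ∀ m, G.outcome π s₀ ((k+1) + m) =
        G.outcome (Function.update σ' i τs.1) s' m := by
      intro m
      rw [aux_outcome_shift π s₀ (k+1) m, hπ']
      simp only [hrk1]
    have houtk : G.outcome π s₀ k = ((ρ k).1, a') := by
      show ((G.run π s₀ k).1, fun j => π j (G.run π s₀ k).2) = _
      rw [hrk]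
      exact Prod.ext rfl hactk
    have hstates : ∀ m, m ≤ k → (G.outcome π s₀ m).1 = (ρ m).1 := by
      intro m hm
      have := aux_run_eq hρ hρ0 π m (fun l hl => houtπ l (lt_of_lt_of_le hl hm))
      show (G.run π s₀ m).1 = _
      rw [this]
    have hsum : ∑ j ∈ Finset.range (k+1), tc i (G.outcome π s₀ j).1 (G.outcome π s₀ j).2
        = ∑ j ∈ Finset.range k, tc i (ρ j).1 (ρ j).2 + tc i (ρ k).1 a' := by
      rw [Finset.sum_range_succ]
      congr 1
      · exact Finset.sum_congr rfl fun m hm => by rw [houtπ m (Finset.mem_range.mp hm)]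
      · rw [houtk]
    have hL : G.playCost tc tgt i (G.outcome σ s₀) =
        ((∑ j ∈ Finset.range k, tc i (ρ j).1 (ρ j).2 : ℕ) : ℕ∞) +
          G.playCost tc tgt i (fun m => ρ (k + m)) := by
      rw [funext hout]
      exact playCost_decomp tc tgt i ρ k (fun j hj => hnt j (le_of_lt hj))
    have hR : G.playCost tc tgt i (G.outcome π s₀) =
        ((∑ j ∈ Finset.range k, tc i (ρ j).1 (ρ j).2 : ℕ) : ℕ∞) + (tc i (ρ k).1 a' : ℕ∞) +
          G.playCost tc tgt i (G.outcome (Function.update σ' i τs.1) s') := by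
      rw [playCost_decomp tc tgt i (G.outcome π s₀) (k+1)
        (fun j hj => by
          rw [hstates j (Nat.lt_succ_iff.mp hj)]
          exact hnt j (Nat.lt_succ_iff.mp hj))]
      rw [hsum, show (fun m => G.outcome π s₀ ((k+1) + m)) = _ from funext hshift,
        Nat.cast_add]
    have hfinal : ((∑ j ∈ Finset.range k, tc i (ρ j).1 (ρ j).2 : ℕ) : ℕ∞) +
        G.playCost tc tgt i (fun m => ρ (k + m)) ≤
        ((∑ j ∈ Finset.range k, tc i (ρ j).1 (ρ j).2 : ℕ) : ℕ∞) +
          ((tc i (ρ k).1 a' : ℕ∞) + G.Val tc tgt i s') :=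
      calc ((∑ j ∈ Finset.range k, tc i (ρ j).1 (ρ j).2 : ℕ) : ℕ∞) +
            G.playCost tc tgt i (fun m => ρ (k + m))
          = G.playCost tc tgt i (G.outcome σ s₀) := hL.symm
        _ ≤ G.playCost tc tgt i (G.outcome π s₀) := hNE
        _ = ((∑ j ∈ Finset.range k, tc i (ρ j).1 (ρ j).2 : ℕ) : ℕ∞) + (tc i (ρ k).1 a' : ℕ∞) +
            G.playCost tc tgt i (G.outcome (Function.update σ' i τs.1) s') := hR
        _ ≤ ((∑ j ∈ Finset.range k, tc i (ρ j).1 (ρ j).2 : ℕ) : ℕ∞) + (tc i (ρ k).1 a' : ℕ∞) +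
            G.Val tc tgt i s' := add_le_add_right hτsVal _
        _ = ((∑ j ∈ Finset.range k, tc i (ρ j).1 (ρ j).2 : ℕ) : ℕ∞) +
            ((tc i (ρ k).1 a' : ℕ∞) + G.Val tc tgt i s') := add_assoc _ _ _
    have hcancel := (WithTop.add_le_add_iff_left
      (show ((∑ j ∈ Finset.range k, tc i (ρ j).1 (ρ j).2 : ℕ) : ℕ∞) ≠ ⊤ by
        exact_mod_cast WithTop.coe_ne_top)).mp hfinal
    exact le_trans hcancel (le_of_eq (add_comm _ _))
  · intro H
    set P : G.State → Fin n → Fin n → G.Strategy := fun s i => Classical.choose (hpunish s i)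
      with hPdef
    have hPval : ∀ s i j, G.IsStrategy j s (P s i j) := fun s i j =>
      (Classical.choose_spec (hpunish s i)).1 j
    have hPpun : ∀ s i τ, G.IsStrategy i s τ →
        G.Val tc tgt i s ≤ G.playCost tc tgt i (G.outcome (Function.update (P s i) i τ) s) :=
      fun s i => (Classical.choose_spec (hpunish s i)).2
    set σ : Fin n → G.Strategy := fun j => neStrat G ρ P A s₀ j with hσdef
    have hσval : ∀ j, G.IsStrategy j s₀ (σ j) := fun j => neStrat_valid hρ hρ0 hPval hA j
    have hσout : ∀ m, G.outcome σ s₀ m = ρ m :=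
      aux_outcome_eq hρ hρ0 σ (fun m j => neStrat_hist ρ P A s₀ j m)
    refine ⟨σ, ⟨hσval, ?_⟩, hσout⟩
    intro i τ hτ
    show G.playCost tc tgt i (G.outcome σ s₀) ≤
      G.playCost tc tgt i (G.outcome (Function.update σ i τ) s₀)
    set π : Fin n → G.Strategy := Function.update σ i τ with hπ
    by_cases hall : ∀ m, G.outcome π s₀ m = ρ m
    · rw [funext hall, funext hσout]
    · push_neg at hall
      set k := Nat.find hall with hk
      have hlt : ∀ l, l < k → G.outcome π s₀ l = ρ l := fun l hl =>
        not_not.mp (Nat.find_min hall hl)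
      have hrk : G.run π s₀ k = ((ρ k).1, hist ρ k) := aux_run_eq hρ hρ0 π k hlt
      have hσhist : ∀ j, σ j (hist ρ k) = (ρ k).2 j := fun j => neStrat_hist ρ P A s₀ j k
      set b := τ (hist ρ k) with hbdef
      have hactk : (fun j => π j (hist ρ k)) = Function.update (ρ k).2 i b := by
        funext j
        rcases eq_or_ne j i with hji | hne
        · rw [hji, hπ]
          simp only [Function.update_self]
          rfl
        · rw [hπ, Function.update_of_ne hne, Function.update_of_ne hne]
          exact hσhist j
      have houtk : G.outcome π s₀ k = ((ρ k).1, Function.update (ρ k).2 i b) := by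
        show ((G.run π s₀ k).1, fun j => π j (G.run π s₀ k).2) = _
        rw [hrk]
        exact Prod.ext rfl hactk
      have hbne : b ≠ (ρ k).2 i := by
        intro he
        apply Nat.find_spec hall
        rw [houtk, he, Function.update_eq_self]
      have hballowed : b ∈ G.allowed i (ρ k).1 := by
        have := hτ (hist ρ k)
        rwa [aux_lastState_con hρ hρ0 (fun m' => aux_con_hist' ρ k m'), hist_length] at this
      set a' := Function.update (ρ k).2 i b with ha'
      set s' := G.update (ρ k).1 a' with hs'
      set devH : G.Hist := hist ρ k ++ [((ρ k).1, a')] with hdevH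
      have hrk1 : G.run π s₀ (k+1) = (s', devH) := aux_run_succ hρ π a' hrk hactk
      set τ' : G.Strategy := fun h => τ (devH ++ h) with hτ'def
      have hlsdev : G.lastState s₀ devH = s' := aux_lastState_concat s₀ (hist ρ k) _
      have hτ'val : G.IsStrategy i s' τ' := hlsdev ▸ aux_isStrategy_shift hτ devH
      have hπ' : (fun j h => π j ((G.run π s₀ (k+1)).2 ++ h)) =
          Function.update (P s' i) i τ' := by
        funext j h
        simp only [hrk1]
        show π j (devH ++ h) = _
        rcases eq_or_ne j i with hji | hne
        · rw [hji, hπ]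
          simp only [Function.update_self]
          rfl
        · rw [hπ, Function.update_of_ne hne, Function.update_of_ne hne]
          exact neStrat_dev hbne P A s₀ j h
      have hshift : ∀ m, G.outcome π s₀ ((k+1) + m) =
          G.outcome (Function.update (P s' i) i τ') s' m := by
        intro m
        rw [aux_outcome_shift π s₀ (k+1) m, hπ']
        simp only [hrk1]
      by_cases hreach : ∃ j, j ≤ k ∧ tgt i (ρ j).1
      · have heq : G.playCost tc tgt i (G.outcome π s₀) = G.playCost tc tgt i ρ :=
          playCost_eq_of_agree tc tgt i ρ (G.outcome π s₀) k
            (fun m hm => by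
              rcases lt_or_eq_of_le hm with h' | h'
              · rw [hlt m h']
              · subst h'; rw [houtk])
            (fun m hm => hlt m hm) hreach
        rw [funext hσout, heq]
      · push_neg at hreach
        have hH := H i k b hballowed hreach
        have hpun : G.Val tc tgt i s' ≤
            G.playCost tc tgt i (G.outcome (Function.update (P s' i) i τ') s') :=
          hPpun s' i τ' hτ'val
        have hstates : ∀ m, m ≤ k → (G.outcome π s₀ m).1 = (ρ m).1 := by
          intro m hm
          have := aux_run_eq hρ hρ0 π m (fun l hl => hlt l (lt_of_lt_of_le hl hm))
          show (G.run π s₀ m).1 = _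
          rw [this]
        have hsum : ∑ j ∈ Finset.range (k+1), tc i (G.outcome π s₀ j).1 (G.outcome π s₀ j).2
            = ∑ j ∈ Finset.range k, tc i (ρ j).1 (ρ j).2 + tc i (ρ k).1 a' := by
          rw [Finset.sum_range_succ]
          congr 1
          · exact Finset.sum_congr rfl fun m hm => by rw [hlt m (Finset.mem_range.mp hm)]
          · rw [houtk]
        have hR : G.playCost tc tgt i (G.outcome π s₀) =
            ((∑ j ∈ Finset.range k, tc i (ρ j).1 (ρ j).2 : ℕ) : ℕ∞) + (tc i (ρ k).1 a' : ℕ∞) +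
              G.playCost tc tgt i (G.outcome (Function.update (P s' i) i τ') s') := by
          rw [playCost_decomp tc tgt i (G.outcome π s₀) (k+1)
            (fun j hj => by
              rw [hstates j (Nat.lt_succ_iff.mp hj)]
              exact hreach j (Nat.lt_succ_iff.mp hj))]
          rw [hsum, show (fun m => G.outcome π s₀ ((k+1) + m)) = _ from funext hshift,
            Nat.cast_add]
        have hL : G.playCost tc tgt i (G.outcome σ s₀) =
            ((∑ j ∈ Finset.range k, tc i (ρ j).1 (ρ j).2 : ℕ) : ℕ∞) +
              G.playCost tc tgt i (fun m => ρ (k + m)) := by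
          rw [funext hσout]
          exact playCost_decomp tc tgt i ρ k (fun j hj => hreach j (le_of_lt hj))
        rw [hL, hR]
        calc ((∑ j ∈ Finset.range k, tc i (ρ j).1 (ρ j).2 : ℕ) : ℕ∞) +
              G.playCost tc tgt i (fun m => ρ (k + m))
            ≤ ((∑ j ∈ Finset.range k, tc i (ρ j).1 (ρ j).2 : ℕ) : ℕ∞) +
              (G.Val tc tgt i s' + (tc i (ρ k).1 a' : ℕ∞)) := add_le_add_right hH _
          _ = ((∑ j ∈ Finset.range k, tc i (ρ j).1 (ρ j).2 : ℕ) : ℕ∞) + (tc i (ρ k).1 a' : ℕ∞) +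
              G.Val tc tgt i s' := by rw [add_comm (G.Val tc tgt i s') _, ← add_assoc]
          _ ≤ ((∑ j ∈ Finset.range k, tc i (ρ j).1 (ρ j).2 : ℕ) : ℕ∞) + (tc i (ρ k).1 a' : ℕ∞) +
              G.playCost tc tgt i (G.outcome (Function.update (P s' i) i τ') s') :=
            add_le_add_right hpun _


end CGame
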